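/- Let (Ω,Σ,μ) be a σ-finite measure space, p: Ω → (1,∞) measurable with p(t) > 1 a.e., u, v measurable, and (x_n) a sequence of measurable functions with sup_n ∫_Ω |x_n|^{p(t)} dμ < ∞. If lim_n ∫_Ω (|x_n−u|^{p(t)} + |x_n−v|^{p(t)} − 2|x_n−(u+v)/2|^{p(t)}) dμ = 0, then u = v almost everywhere. -/

import Mathlib

open MeasureTheory Filter Set
open scoped ENNReal

lemma mid_strict (a b q : ℝ) (hq : 1 < q) (hab : a ≠ b) :
    2 * |(a + b) / 2| ^ q < |a| ^ q + |b| ^ q := by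
  rcases eq_or_ne |a| |b| with h | h
  · have hb : a = -b := by
      rcases abs_eq_abs.mp h with h1 | h1
      · exact absurd h1 hab
      · exact h1
    have ha0 : a ≠ 0 := by
      rintro rfl
      rw [eq_comm, neg_eq_zero] at hb
      exact hab hb.symm
    have hmid : (a + b) / 2 = 0 := by rw [hb]; ring
    rw [hmid, abs_zero, Real.zero_rpow (by linarith), mul_zero]
    have h1 : 0 < |a| ^ q := Real.rpow_pos_of_pos (abs_pos.mpr ha0) q
    have h2 : 0 ≤ |b| ^ q := Real.rpow_nonneg (abs_nonneg b) q
    linarith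
  · have hcvx := strictConvexOn_rpow hq
    have key := hcvx.2 (Set.mem_Ici.mpr (abs_nonneg a)) (Set.mem_Ici.mpr (abs_nonneg b))
      h (by norm_num : (0:ℝ) < 1/2) (by norm_num : (0:ℝ) < 1/2) (by norm_num)
    simp only [smul_eq_mul] at key
    have h2 : |(a + b) / 2| ≤ (|a| + |b|) / 2 := by
      have := abs_add_le a b
      rw [abs_div, abs_two]
      linarith
    have h3 : |(a + b) / 2| ^ q ≤ ((|a| + |b|) / 2) ^ q :=
      Real.rpow_le_rpow (abs_nonneg _) h2 (by linarith)
    have h4 : ((|a| + |b|) / 2) = 1/2 * |a| + 1/2 * |b| := by ring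
    rw [h4] at h3
    linarith

lemma exists_delta (ε R q₀ q₁ : ℝ) (hε : 0 < ε) (hq₀ : 1 < q₀) :
    ∃ δ : ℝ, 0 < δ ∧ ∀ a b q : ℝ, |a| ≤ R → |b| ≤ R → ε ≤ |a - b| →
      q₀ ≤ q → q ≤ q₁ → δ ≤ |a| ^ q + |b| ^ q - 2 * |(a + b) / 2| ^ q := by
  set g : ℝ × ℝ × ℝ → ℝ := fun w => |w.1| ^ w.2.2 + |w.2.1| ^ w.2.2
      - 2 * |(w.1 + w.2.1) / 2| ^ w.2.2 with hg
  set K : Set (ℝ × ℝ × ℝ) :=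
    (Icc (-R) R ×ˢ Icc (-R) R ×ˢ Icc q₀ q₁) ∩ {w | ε ≤ |w.1 - w.2.1|} with hK
  have hKc : IsCompact K := by
    apply (isCompact_Icc.prod (isCompact_Icc.prod isCompact_Icc)).inter_right
    exact isClosed_le continuous_const
      ((continuous_fst.sub (continuous_fst.comp continuous_snd)).abs)
  have hgc : ContinuousOn g K := by
    intro w hw
    have hq : 0 < w.2.2 := lt_of_lt_of_le (by linarith : (0:ℝ) < q₀) hw.1.2.2.1
    apply ContinuousAt.continuousWithinAt
    apply ContinuousAt.sub
    · apply ContinuousAt.add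
      · exact (continuous_fst.abs.continuousAt).rpow
          (continuous_snd.snd.continuousAt) (Or.inr hq)
      · exact (continuous_snd.fst.abs.continuousAt).rpow
          (continuous_snd.snd.continuousAt) (Or.inr hq)
    · apply ContinuousAt.mul continuousAt_const
      exact (((continuous_fst.add continuous_snd.fst).div_const 2).abs.continuousAt).rpow
        (continuous_snd.snd.continuousAt) (Or.inr hq)
  have hmem : ∀ a b q : ℝ, |a| ≤ R → |b| ≤ R → ε ≤ |a - b| → q₀ ≤ q → q ≤ q₁ →
      (a, b, q) ∈ K := by
    intro a b q h1 h2 h3 h4 h5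
    refine ⟨⟨abs_le.mp h1, abs_le.mp h2, h4, h5⟩, h3⟩
  rcases K.eq_empty_or_nonempty with hKe | hKne
  · exact ⟨1, one_pos, fun a b q h1 h2 h3 h4 h5 => by
      have := hmem a b q h1 h2 h3 h4 h5; rw [hKe] at this; exact absurd this (notMem_empty _)⟩
  · obtain ⟨w₀, hw₀, hmin⟩ := hKc.exists_isMinOn hKne hgc
    refine ⟨g w₀, ?_, fun a b q h1 h2 h3 h4 h5 => hmin (hmem a b q h1 h2 h3 h4 h5)⟩
    have hab : w₀.1 ≠ w₀.2.1 := by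
      intro h
      have := hw₀.2
      rw [Set.mem_setOf_eq, h, sub_self, abs_zero] at this
      linarith
    have := mid_strict w₀.1 w₀.2.1 w₀.2.2 (lt_of_lt_of_le hq₀ hw₀.1.2.2.1) hab
    simp only [hg]
    linarith

theorem ae_eq_of_modular_midpoint_limit
    {Ω : Type*} [MeasurableSpace Ω] (μ : Measure Ω) [SigmaFinite μ]
    (p : Ω → ℝ) (hp : Measurable p) (hp1 : ∀ᵐ t ∂μ, 1 < p t)
    (u v : Ω → ℝ) (hu : Measurable u) (hv : Measurable v)
    (x : ℕ → Ω → ℝ) (hx : ∀ n, Measurable (x n))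
    (M : ℝ≥0∞) (hMfin : M ≠ ⊤)
    (hbd : ∀ n, ∫⁻ t, ENNReal.ofReal (|x n t| ^ p t) ∂μ ≤ M)
    (hlim : Tendsto (fun n => ∫⁻ t, ENNReal.ofReal
        (|x n t - u t| ^ p t + |x n t - v t| ^ p t
          - 2 * |x n t - (u t + v t) / 2| ^ p t) ∂μ) atTop (nhds 0)) :
    u =ᵐ[μ] v := by
  by_contra hcon
  have hne : μ {t | u t ≠ v t} ≠ 0 := by
    intro h
    exact hcon (by rw [Filter.EventuallyEq, ae_iff]; simpa using h)
  -- the pieces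
  set A : ℕ → Set Ω := fun k =>
    spanningSets μ k ∩ {t | u t ≠ v t} ∩ {t | |u t| ≤ (k : ℝ)} ∩ {t | |v t| ≤ (k : ℝ)}
      ∩ {t | 1 / ((k : ℝ) + 1) ≤ |u t - v t|}
      ∩ {t | 1 + 1 / ((k : ℝ) + 1) ≤ p t} ∩ {t | p t ≤ (k : ℝ)} with hA
  have hAm : ∀ k, MeasurableSet (A k) := by
    intro k
    refine ((((((measurableSet_spanningSets μ k).inter
        (measurableSet_eq_fun hu hv).compl).inter
        (measurableSet_le hu.abs measurable_const)).inter
        (measurableSet_le hv.abs measurable_const)).inter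
        (measurableSet_le measurable_const (hu.sub hv).abs)).inter
        (measurableSet_le measurable_const hp)).inter
        (measurableSet_le hp measurable_const)
  have hcov : {t | u t ≠ v t} ∩ {t | 1 < p t} ⊆ ⋃ k, A k := by
    rintro t ⟨ht1, ht2⟩
    have ht2' : 1 < p t := ht2
    obtain ⟨k₁, hk₁⟩ : ∃ k, t ∈ spanningSets μ k := by
      have := iUnion_spanningSets μ
      have ht : t ∈ ⋃ i, spanningSets μ i := this ▸ mem_univ t
      exact mem_iUnion.mp ht
    have hd : 0 < |u t - v t| := abs_pos.mpr (sub_ne_zero.mpr ht1)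
    obtain ⟨k₂, hk₂⟩ := exists_nat_one_div_lt hd
    obtain ⟨k₅, hk₅⟩ := exists_nat_one_div_lt (sub_pos.mpr ht2')
    obtain ⟨k₃, hk₃⟩ := exists_nat_ge |u t|
    obtain ⟨k₄, hk₄⟩ := exists_nat_ge |v t|
    obtain ⟨k₆, hk₆⟩ := exists_nat_ge (p t)
    set k := k₁ + k₂ + k₃ + k₄ + k₅ + k₆ with hk
    have hcast : ∀ m : ℕ, m ≤ k → (m : ℝ) ≤ (k : ℝ) := fun m hm => Nat.cast_le.mpr hm
    have hdiv : ∀ m : ℕ, m ≤ k → 1 / ((k : ℝ) + 1) ≤ 1 / ((m : ℝ) + 1) := by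
      intro m hm
      apply one_div_le_one_div_of_le
      · positivity
      · have := hcast m hm; linarith
    refine mem_iUnion.mpr ⟨k, ⟨⟨⟨⟨⟨⟨?_, ht1⟩, ?_⟩, ?_⟩, ?_⟩, ?_⟩, ?_⟩⟩
    · exact monotone_spanningSets μ (by omega) hk₁
    · exact le_trans hk₃ (hcast k₃ (by omega))
    · exact le_trans hk₄ (hcast k₄ (by omega))
    · exact le_trans (hdiv k₂ (by omega)) hk₂.le
    · show 1 + 1 / ((k:ℝ) + 1) ≤ p t
      have := hdiv k₅ (by omega)
      linarith
    · exact le_trans hk₆ (hcast k₆ (by omega))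
  have h0 : μ {t | ¬ 1 < p t} = 0 := ae_iff.mp hp1
  have hpos : μ ({t | u t ≠ v t} ∩ {t | 1 < p t}) ≠ 0 := by
    intro h
    apply hne
    have hsub : {t | u t ≠ v t} ⊆ ({t | u t ≠ v t} ∩ {t | 1 < p t}) ∪ {t | ¬ 1 < p t} := by
      intro t ht
      by_cases hp' : 1 < p t
      · exact Or.inl ⟨ht, hp'⟩
      · exact Or.inr hp'
    refine le_antisymm ?_ zero_le
    calc μ {t | u t ≠ v t} ≤ μ (({t | u t ≠ v t} ∩ {t | 1 < p t}) ∪ {t | ¬ 1 < p t}) :=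
          measure_mono hsub
      _ ≤ μ ({t | u t ≠ v t} ∩ {t | 1 < p t}) + μ {t | ¬ 1 < p t} := measure_union_le _ _
      _ = 0 := by rw [h, h0, add_zero]
  obtain ⟨k, hk⟩ : ∃ k, μ (A k) ≠ 0 := by
    by_contra h
    push_neg at h
    exact hpos (le_antisymm (le_trans (measure_mono hcov)
      (le_of_eq (measure_iUnion_null h))) zero_le)
  -- constants
  set ε : ℝ := 1 / ((k : ℝ) + 1) with hεdef
  set C : ℝ := (k : ℝ) with hCdef
  set q₀ : ℝ := 1 + 1 / ((k : ℝ) + 1) with hq₀def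
  set q₁ : ℝ := (k : ℝ) with hq₁def
  have hεpos : 0 < ε := by positivity
  have hq₀1 : 1 < q₀ := by simp only [hq₀def]; linarith
  set c : ℝ≥0∞ := μ (A k) with hcdef
  have hcT : c ≠ ⊤ := by
    refine (lt_of_le_of_lt (measure_mono ?_) (measure_spanningSets_lt_top μ k)).ne
    exact fun t ht => ht.1.1.1.1.1.1
  have hc2 : c / 2 ≠ 0 := by
    simp [ENNReal.div_eq_zero_iff, hk]
  have hc2T : c / 2 ≠ ⊤ := ne_top_of_le_ne_top hcT ENNReal.half_le_self
  have hM1 : M + 1 ≠ ⊤ := ENNReal.add_ne_top.mpr ⟨hMfin, ENNReal.one_ne_top⟩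
  have hfrac : (M + 1) / (c / 2) ≠ ⊤ := (ENNReal.div_lt_top hM1 hc2).ne
  set r : ℝ := ((M + 1) / (c / 2)).toReal with hrdef
  set R : ℝ := max 1 (r + 1) with hRdef
  have hR1 : (1 : ℝ) ≤ R := le_max_left _ _
  have hRq : r ≤ R ^ q₀ := by
    have h1 : r + 1 ≤ R := le_max_right _ _
    have h2 : R = R ^ (1 : ℝ) := (Real.rpow_one R).symm
    have h3 : R ^ (1:ℝ) ≤ R ^ q₀ := Real.rpow_le_rpow_of_exponent_le hR1 (by linarith)
    have h4 : R ≤ R ^ q₀ := by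
      calc R = R ^ (1:ℝ) := h2
        _ ≤ R ^ q₀ := h3
    exact le_trans (by linarith : r ≤ R) h4
  set aR : ℝ≥0∞ := ENNReal.ofReal (R ^ q₀) with haRdef
  have hkey : M + 1 ≤ aR * (c / 2) := by
    have h1 : (M + 1) / (c / 2) ≤ aR := by
      rw [← ENNReal.ofReal_toReal hfrac]
      exact ENNReal.ofReal_le_ofReal hRq
    calc M + 1 = (M + 1) / (c / 2) * (c / 2) := (ENNReal.div_mul_cancel hc2 hc2T).symm
      _ ≤ aR * (c / 2) := mul_le_mul_left h1 _
  -- Chebyshev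
  have hbad : ∀ n, μ (A k ∩ {t | R ≤ |x n t|}) ≤ c / 2 := by
    intro n
    by_contra h
    push_neg at h
    have h1 : aR * μ (A k ∩ {t | R ≤ |x n t|}) ≤ M := by
      calc aR * μ (A k ∩ {t | R ≤ |x n t|})
          = ∫⁻ _ in A k ∩ {t | R ≤ |x n t|}, aR ∂μ := (setLIntegral_const _ _).symm
        _ ≤ ∫⁻ t in A k ∩ {t | R ≤ |x n t|}, ENNReal.ofReal (|x n t| ^ p t) ∂μ := by
            refine setLIntegral_mono (((hx n).abs.pow hp).ennreal_ofReal) ?_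
            intro t ht
            refine ENNReal.ofReal_le_ofReal ?_
            have hq0t : q₀ ≤ p t := ht.1.1.2
            calc R ^ q₀ ≤ R ^ p t := Real.rpow_le_rpow_of_exponent_le hR1 hq0t
              _ ≤ |x n t| ^ p t :=
                  Real.rpow_le_rpow (by linarith) ht.2 (by linarith)
        _ ≤ ∫⁻ t, ENNReal.ofReal (|x n t| ^ p t) ∂μ := setLIntegral_le_lintegral _ _
        _ ≤ M := hbd n
    have h2 : M + 1 ≤ M := le_trans hkey (le_trans (mul_le_mul_right h.le _) h1)
    exact absurd h2 (by simpa using (ENNReal.lt_add_right hMfin one_ne_zero).not_ge)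
  set S : ℕ → Set Ω := fun n => A k ∩ {t | |x n t| ≤ R} with hSdef
  have hSm : ∀ n, c / 2 ≤ μ (S n) := by
    intro n
    have hsub : A k ⊆ S n ∪ (A k ∩ {t | R ≤ |x n t|}) := by
      intro t ht
      rcases le_total |x n t| R with h | h
      · exact Or.inl ⟨ht, h⟩
      · exact Or.inr ⟨ht, h⟩
    have h2 : c ≤ μ (S n) + c / 2 :=
      le_trans (measure_mono hsub) (le_trans (measure_union_le _ _)
        (add_le_add_right (hbad n) _))
    by_contra hlt
    push_neg at hlt
    have : c < c := by
      calc c ≤ μ (S n) + c / 2 := h2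
        _ < c / 2 + c / 2 := ENNReal.add_lt_add_right hc2T hlt
        _ = c := ENNReal.add_halves c
    exact lt_irrefl _ this
  -- uniform convexity constant
  obtain ⟨δ, hδpos, hδ⟩ := exists_delta ε (R + C) q₀ q₁ hεpos hq₀1
  -- lower bound for the integrals
  have hlow : ∀ n, ENNReal.ofReal δ * (c / 2) ≤ ∫⁻ t, ENNReal.ofReal
      (|x n t - u t| ^ p t + |x n t - v t| ^ p t
        - 2 * |x n t - (u t + v t) / 2| ^ p t) ∂μ := by
    intro n
    have hEm : Measurable fun t => ENNReal.ofReal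
        (|x n t - u t| ^ p t + |x n t - v t| ^ p t
          - 2 * |x n t - (u t + v t) / 2| ^ p t) := by
      refine Measurable.ennreal_ofReal ?_
      exact ((((hx n).sub hu).abs.pow hp).add (((hx n).sub hv).abs.pow hp)).sub
        (measurable_const.mul (((hx n).sub ((hu.add hv).div_const 2)).abs.pow hp))
    calc ENNReal.ofReal δ * (c / 2) ≤ ENNReal.ofReal δ * μ (S n) :=
          mul_le_mul_right (hSm n) _
      _ = ∫⁻ _ in S n, ENNReal.ofReal δ ∂μ := (setLIntegral_const _ _).symm
      _ ≤ ∫⁻ t in S n, ENNReal.ofReal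
            (|x n t - u t| ^ p t + |x n t - v t| ^ p t
              - 2 * |x n t - (u t + v t) / 2| ^ p t) ∂μ := by
          refine setLIntegral_mono hEm ?_
          intro t ht
          refine ENNReal.ofReal_le_ofReal ?_
          obtain ⟨⟨⟨⟨⟨⟨hspan, hne'⟩, hub⟩, hvb⟩, heps⟩, hq0'⟩, hq1'⟩ := ht.1
          have hxa : |x n t - u t| ≤ R + C :=
            le_trans (abs_sub _ _) (add_le_add ht.2 hub)
          have hxb : |x n t - v t| ≤ R + C :=
            le_trans (abs_sub _ _) (add_le_add ht.2 hvb)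
          have hab : ε ≤ |x n t - u t - (x n t - v t)| := by
            have he : x n t - u t - (x n t - v t) = v t - u t := by ring
            rw [he, abs_sub_comm]
            exact heps
          have := hδ (x n t - u t) (x n t - v t) (p t) hxa hxb hab hq0' hq1'
          have hm : (x n t - u t + (x n t - v t)) / 2 = x n t - (u t + v t) / 2 := by ring
          rw [hm] at this
          exact this
      _ ≤ ∫⁻ t, ENNReal.ofReal
            (|x n t - u t| ^ p t + |x n t - v t| ^ p t
              - 2 * |x n t - (u t + v t) / 2| ^ p t) ∂μ := setLIntegral_le_lintegral _ _
  have hge := ge_of_tendsto' hlim hlow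
  rw [le_zero_iff] at hge
  rcases mul_eq_zero.mp hge with h | h
  · exact absurd h (by simp [ENNReal.ofReal_eq_zero]; linarith)
  · exact hc2 h
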